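/- For the dyadic tree (K = 2) with non-radial data λ_1 ≡ μ_1 ≡ 1 on the subtree T_1 and λ_2 ≡ 1, μ_2(x) = 2^{−j(x)} on T_2, one has R_p|_{T_1} = (1/2)∫_0^∞ 2^{j(t)/(1−p)} dt < ∞ and R_p|_{T_2} = (1/2)∫_0^∞ (2^{−j(t)})^{1/(1−p)} 2^{j(t)/(1−p)} dt = (1/2)∫_0^∞ 1 dt = ∞, hence R_p = R_p|_{T_1} + R_p|_{T_2} = ∞. -/

import Mathlib

open MeasureTheory Set ENNReal

/-- For the dyadic tree (`K = 2`) with non-radial data `λ₁ ≡ μ₁ ≡ 1` on `T₁` and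
`λ₂ ≡ 1`, `μ₂(t) = 2^{−j(t)}` on `T₂` (where `j(t) = ⌈t⌉`):
`R_p|_{T₁} = (1/2)∫_0^∞ 2^{j(t)/(1−p)} dt < ∞`,
`R_p|_{T₂} = (1/2)∫_0^∞ (2^{−j(t)})^{1/(1−p)} 2^{j(t)/(1−p)} dt = (1/2)∫_0^∞ 1 dt = ∞`,
hence `R_p = R_p|_{T₁} + R_p|_{T₂} = ∞`. -/
theorem stmt16 (p : ℝ) (hp : 1 < p) :
    (1/2 : ℝ≥0∞) * (∫⁻ t in Set.Ioi (0:ℝ),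
        ENNReal.ofReal ((2:ℝ) ^ ((⌈t⌉:ℝ)/(1-p)))) < ⊤ ∧
    (1/2 : ℝ≥0∞) * (∫⁻ t in Set.Ioi (0:ℝ),
        ENNReal.ofReal (((2:ℝ) ^ (-(⌈t⌉:ℝ))) ^ ((1:ℝ)/(1-p)) * (2:ℝ) ^ ((⌈t⌉:ℝ)/(1-p)))) =
      (1/2 : ℝ≥0∞) * (∫⁻ t in Set.Ioi (0:ℝ), (1:ℝ≥0∞)) ∧
    (1/2 : ℝ≥0∞) * (∫⁻ t in Set.Ioi (0:ℝ),
        ENNReal.ofReal (((2:ℝ) ^ (-(⌈t⌉:ℝ))) ^ ((1:ℝ)/(1-p)) * (2:ℝ) ^ ((⌈t⌉:ℝ)/(1-p)))) = ⊤ ∧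
    (1/2 : ℝ≥0∞) * (∫⁻ t in Set.Ioi (0:ℝ),
        ENNReal.ofReal ((2:ℝ) ^ ((⌈t⌉:ℝ)/(1-p)))) +
      (1/2 : ℝ≥0∞) * (∫⁻ t in Set.Ioi (0:ℝ),
        ENNReal.ofReal (((2:ℝ) ^ (-(⌈t⌉:ℝ))) ^ ((1:ℝ)/(1-p)) * (2:ℝ) ^ ((⌈t⌉:ℝ)/(1-p)))) = ⊤ := by
  have hp1 : (1:ℝ) - p ≠ 0 := by linarith
  have h2 : (0:ℝ) ≤ 2 := by norm_num
  -- the second integrand is identically 1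
  have hone : ∀ t : ℝ,
      ENNReal.ofReal (((2:ℝ) ^ (-(⌈t⌉:ℝ))) ^ ((1:ℝ)/(1-p)) * (2:ℝ) ^ ((⌈t⌉:ℝ)/(1-p)))
        = (1:ℝ≥0∞) := by
    intro t
    rw [← Real.rpow_mul h2, ← Real.rpow_add (by norm_num : (0:ℝ) < 2)]
    have he : (-(⌈t⌉:ℝ)) * ((1:ℝ)/(1-p)) + (⌈t⌉:ℝ)/(1-p) = 0 := by
      field_simp
      ring
    rw [he, Real.rpow_zero, ENNReal.ofReal_one]
  have hvol : (∫⁻ t in Set.Ioi (0:ℝ),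
      ENNReal.ofReal (((2:ℝ) ^ (-(⌈t⌉:ℝ))) ^ ((1:ℝ)/(1-p)) * (2:ℝ) ^ ((⌈t⌉:ℝ)/(1-p))))
      = ⊤ := by
    simp only [hone]
    rw [setLIntegral_one, Real.volume_Ioi]
  -- finiteness of the first integral
  have hc : (0:ℝ) < Real.log 2 / (p - 1) :=
    div_pos (Real.log_pos (by norm_num)) (by linarith)
  have hfin : (∫⁻ t in Set.Ioi (0:ℝ),
      ENNReal.ofReal ((2:ℝ) ^ ((⌈t⌉:ℝ)/(1-p)))) < ⊤ := by
    have hint : IntegrableOn (fun t : ℝ => Real.exp (-(Real.log 2 / (p - 1)) * t))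
        (Set.Ioi (0:ℝ)) := exp_neg_integrableOn_Ioi 0 hc
    have hbd : ∫⁻ t in Set.Ioi (0:ℝ), ENNReal.ofReal ((2:ℝ) ^ ((⌈t⌉:ℝ)/(1-p)))
        ≤ ∫⁻ t in Set.Ioi (0:ℝ),
            ENNReal.ofReal (Real.exp (-(Real.log 2 / (p - 1)) * t)) := by
      refine setLIntegral_mono (by fun_prop) ?_
      intro t ht
      refine ENNReal.ofReal_le_ofReal ?_
      rw [Real.rpow_def_of_pos (by norm_num : (0:ℝ) < 2)]
      refine Real.exp_le_exp.2 ?_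
      have hct : t ≤ (⌈t⌉:ℝ) := Int.le_ceil t
      have hlog : (0:ℝ) < Real.log 2 := Real.log_pos (by norm_num)
      rw [div_eq_mul_inv, mul_comm (Real.log 2)]
      have h1p : (1 - p)⁻¹ ≤ 0 := by
        apply inv_nonpos.2; linarith
      have : (⌈t⌉:ℝ) * (1-p)⁻¹ ≤ t * (1-p)⁻¹ :=
        mul_le_mul_of_nonpos_right hct h1p
      calc (⌈t⌉:ℝ) * (1-p)⁻¹ * Real.log 2 ≤ t * (1-p)⁻¹ * Real.log 2 := by
            exact mul_le_mul_of_nonneg_right this hlog.le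
        _ = -(Real.log 2 / (p-1)) * t := by
            rw [show (1-p)⁻¹ = -((p-1)⁻¹) by rw [neg_inv, neg_sub]]
            ring
    refine lt_of_le_of_lt hbd ?_
    exact hint.lintegral_lt_top
  refine ⟨?_, ?_, ?_, ?_⟩
  · exact ENNReal.mul_lt_top (by norm_num) hfin
  · rw [hvol, setLIntegral_one, Real.volume_Ioi]
  · rw [hvol, ENNReal.mul_top (by norm_num)]
  · rw [hvol, ENNReal.mul_top (by norm_num)]; simp
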